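/- arXiv:1407.7687 — 4 statements merged into one kernel-verified Lean document; each statement's English description precedes it below -/
import Mathlib

section
/- If X is a compact metric space and f : X → Y is an Edelstein contracting map into a metric space Y (i.e., d_Y(f(x),f(x')) < d_X(x,x') for all distinct x, x'), then f is Rakotch contracting: there exists φ : [0,∞) → [0,∞) with d_Y(f(x),f(x')) ≤ φ(d_X(x,x')) for all x, x', and sup_{a≤t<∞} φ(t)/t < 1 for every a > 0. -/
/-- For a compact metric space `X`, every Edelstein contracting map `f : X → Y`
is Rakotch contracting. -/
theorem edelstein_implies_rakotch_of_compact
    {X Y : Type*} [MetricSpace X] [CompactSpace X] [MetricSpace Y] (f : X → Y)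
    (hEd : ∀ x x' : X, x ≠ x' → dist (f x) (f x') < dist x x') :
    ∃ φ : ℝ → ℝ, (∀ t, 0 ≤ t → 0 ≤ φ t) ∧
      (∀ x x' : X, dist (f x) (f x') ≤ φ (dist x x')) ∧
      ∀ a : ℝ, 0 < a → ∃ c : ℝ, c < 1 ∧ ∀ t, a ≤ t → φ t ≤ c * t := by
  -- f is 1-Lipschitz, hence continuous
  have hle : ∀ x x' : X, dist (f x) (f x') ≤ dist x x' := by
    intro x x'
    rcases eq_or_ne x x' with rfl | h
    · simp
    · exact (hEd x x' h).le
  have hf : Continuous f :=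
    (LipschitzWith.of_dist_le_mul (K := 1) (fun x y => by
      simp only [NNReal.coe_one, one_mul]; exact hle x y)).continuous
  -- the ratio function
  set g : X × X → ℝ := fun p => dist (f p.1) (f p.2) / dist p.1 p.2 with hg
  -- sets of ratios
  set S : ℝ → Set ℝ := fun t => insert 0 (g '' {p : X × X | t ≤ dist p.1 p.2}) with hS
  have hSne : ∀ t, (S t).Nonempty := fun t => ⟨0, Set.mem_insert _ _⟩
  have hSbdd : ∀ t, ∀ y ∈ S t, y ≤ 1 := by
    intro t y hy
    rcases hy with rfl | ⟨p, _, rfl⟩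
    · exact zero_le_one
    · rcases eq_or_ne p.1 p.2 with h | h
      · simp [hg, h]
      · have hd : 0 < dist p.1 p.2 := dist_pos.2 h
        exact le_of_lt ((div_lt_one hd).2 (hEd _ _ h))
  set c : ℝ → ℝ := fun t => sSup (S t) with hc
  have hc_nonneg : ∀ t, 0 ≤ c t := fun t =>
    le_csSup ⟨1, hSbdd t⟩ (Set.mem_insert _ _)
  have hc_anti : ∀ {s t : ℝ}, s ≤ t → c t ≤ c s := by
    intro s t hst
    apply csSup_le_csSup ⟨1, hSbdd s⟩ (hSne t)
    intro y hy
    rcases hy with rfl | ⟨p, hp, rfl⟩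
    · exact Set.mem_insert _ _
    · exact Set.mem_insert_of_mem _ ⟨p, le_trans hst hp, rfl⟩
  refine ⟨fun t => c t * t, ?_, ?_, ?_⟩
  · intro t ht
    exact mul_nonneg (hc_nonneg t) ht
  · intro x x'
    rcases eq_or_ne x x' with rfl | h
    · simp
    · have hd : 0 < dist x x' := dist_pos.2 h
      have hmem : g (x, x') ∈ S (dist x x') :=
        Set.mem_insert_of_mem _ ⟨(x, x'), show dist x x' ≤ dist x x' from le_refl _, rfl⟩
      have := le_csSup ⟨1, hSbdd (dist x x')⟩ hmem
      calc dist (f x) (f x') = g (x, x') * dist x x' := by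
            show dist (f x) (f x') = dist (f x) (f x') / dist x x' * dist x x'
            exact (div_mul_cancel₀ _ hd.ne').symm
        _ ≤ c (dist x x') * dist x x' := mul_le_mul_of_nonneg_right this hd.le
  · intro a ha
    -- show c a < 1 using compactness
    have hca : c a < 1 := by
      set K : Set (X × X) := {p : X × X | a ≤ dist p.1 p.2} with hK
      have hKclosed : IsClosed K :=
        isClosed_le continuous_const (continuous_dist.comp
          (continuous_fst.prodMk continuous_snd))
      have hKcompact : IsCompact K := hKclosed.isCompact
      rcases K.eq_empty_or_nonempty with hKe | hKne
      · have : S a = {0} := by simp [hS, hK] at hKe ⊢; simp [hKe]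
        simp [hc, this]
      · have hgcont : ContinuousOn g K := by
          apply ContinuousOn.div
          · exact ((hf.comp continuous_fst).dist (hf.comp continuous_snd)).continuousOn
          · exact (continuous_dist.comp
              (continuous_fst.prodMk continuous_snd)).continuousOn
          · intro p hp
            exact ne_of_gt (lt_of_lt_of_le ha hp)
        obtain ⟨p, hpK, hpmax⟩ := hKcompact.exists_isMaxOn hKne hgcont
        have hpne : p.1 ≠ p.2 := by
          intro h
          have : (0:ℝ) < dist p.1 p.2 := lt_of_lt_of_le ha hpK
          rw [h] at this; simp at this
        have hgp : g p < 1 := by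
          have hd : 0 < dist p.1 p.2 := dist_pos.2 hpne
          exact (div_lt_one hd).2 (hEd _ _ hpne)
        have : c a ≤ g p := by
          apply csSup_le (hSne a)
          intro y hy
          rcases hy with rfl | ⟨q, hq, rfl⟩
          · exact div_nonneg dist_nonneg dist_nonneg
          · exact hpmax hq
        exact lt_of_le_of_lt this hgp
    refine ⟨c a, hca, ?_⟩
    intro t hta
    have ht : 0 ≤ t := le_trans ha.le hta
    exact mul_le_mul_of_nonneg_right (hc_anti hta) ht
end

section
/- If f : X → Y is a Rakotch contracting map between compact metric spaces, then the induced pushforward map Pf : PX → PY on spaces of Borel probability measures with the Wasserstein metric is also Rakotch contracting. -/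
open MeasureTheory

/-- The Wasserstein (Kantorovich) distance between two Borel probability measures. -/
noncomputable def wassersteinDist {X : Type*} [MetricSpace X] [MeasurableSpace X]
    (μ η : Measure X) : ℝ :=
  sInf {r : ℝ | ∃ lam : Measure (X × X), IsProbabilityMeasure lam ∧
    lam.map Prod.fst = μ ∧ lam.map Prod.snd = η ∧ r = ∫ p, dist p.1 p.2 ∂lam}

/-- The optimal Rakotch modulus: `rakBeta φ a = sup_{t ≥ a} max (φ t / t) 0`. -/
noncomputable def rakBeta (φ : ℝ → ℝ) (a : ℝ) : ℝ :=
  sSup ((fun t => max (φ t / t) 0) '' Set.Ici a)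

lemma rakBeta_bdd {φ : ℝ → ℝ} {a c : ℝ} (hc : ∀ t, a ≤ t → φ t ≤ c * t) (ha : 0 < a) :
    ∀ x ∈ (fun t => max (φ t / t) 0) '' Set.Ici a, x ≤ max c 0 := by
  rintro x ⟨t, ht, rfl⟩
  have ht0 : 0 < t := lt_of_lt_of_le ha ht
  have h1 : φ t / t ≤ c := (div_le_iff₀ ht0).2 (hc t ht)
  exact max_le_max h1 le_rfl

lemma rakBeta_nonempty (φ : ℝ → ℝ) (a : ℝ) :
    ((fun t => max (φ t / t) 0) '' Set.Ici a).Nonempty :=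
  ⟨_, ⟨a, Set.self_mem_Ici, rfl⟩⟩

lemma rakBeta_lt_one {φ : ℝ → ℝ} {a : ℝ}
    (hrak : ∀ b : ℝ, 0 < b → ∃ c : ℝ, c < 1 ∧ ∀ t, b ≤ t → φ t ≤ c * t)
    (ha : 0 < a) : rakBeta φ a < 1 := by
  obtain ⟨c, hc1, hc⟩ := hrak a ha
  have h := csSup_le (rakBeta_nonempty φ a) (rakBeta_bdd hc ha)
  have : max c 0 < 1 := max_lt hc1 one_pos
  exact lt_of_le_of_lt h this

lemma rakBeta_nonneg {φ : ℝ → ℝ} {a : ℝ}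
    (hrak : ∀ b : ℝ, 0 < b → ∃ c : ℝ, c < 1 ∧ ∀ t, b ≤ t → φ t ≤ c * t)
    (ha : 0 < a) : 0 ≤ rakBeta φ a := by
  obtain ⟨c, _, hc⟩ := hrak a ha
  have h := le_csSup ⟨max c 0, rakBeta_bdd hc ha⟩ (show _ ∈ _ from ⟨a, Set.self_mem_Ici, rfl⟩)
  exact le_trans (le_max_right _ _) h

lemma rakBeta_anti {φ : ℝ → ℝ} {a b : ℝ}
    (hrak : ∀ b : ℝ, 0 < b → ∃ c : ℝ, c < 1 ∧ ∀ t, b ≤ t → φ t ≤ c * t)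
    (ha : 0 < a) (hab : a ≤ b) : rakBeta φ b ≤ rakBeta φ a := by
  obtain ⟨c, _, hc⟩ := hrak a ha
  exact csSup_le_csSup ⟨max c 0, rakBeta_bdd hc ha⟩ (rakBeta_nonempty φ b)
    (Set.image_mono (Set.Ici_subset_Ici.2 hab))

lemma le_rakBeta_mul {φ : ℝ → ℝ} {a t : ℝ}
    (hrak : ∀ b : ℝ, 0 < b → ∃ c : ℝ, c < 1 ∧ ∀ t, b ≤ t → φ t ≤ c * t)
    (ha : 0 < a) (hat : a ≤ t) : φ t ≤ rakBeta φ a * t := by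
  obtain ⟨c, _, hc⟩ := hrak a ha
  have ht0 : 0 < t := lt_of_lt_of_le ha hat
  have h := le_csSup ⟨max c 0, rakBeta_bdd hc ha⟩ (show _ ∈ _ from ⟨t, Set.mem_Ici.2 hat, rfl⟩)
  have : φ t / t ≤ rakBeta φ a := le_trans (le_max_left _ _) h
  calc φ t = φ t / t * t := by field_simp
  _ ≤ rakBeta φ a * t := by
      exact mul_le_mul_of_nonneg_right this ht0.le

/-- If `f : X → Y` is Rakotch contracting between compact metric spaces, then the
pushforward map on Borel probability measures is Rakotch contracting for the
Wasserstein metric. -/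
theorem pushforward_rakotch_contracting
    {X Y : Type*} [MetricSpace X] [CompactSpace X] [MeasurableSpace X] [BorelSpace X]
    [MetricSpace Y] [CompactSpace Y] [MeasurableSpace Y] [BorelSpace Y]
    (f : X → Y) (φ : ℝ → ℝ)
    (hcontr : ∀ x x' : X, dist (f x) (f x') ≤ φ (dist x x'))
    (hrak : ∀ a : ℝ, 0 < a → ∃ c : ℝ, c < 1 ∧ ∀ t, a ≤ t → φ t ≤ c * t) :
    ∃ ψ : ℝ → ℝ, (∀ a : ℝ, 0 < a → ∃ c : ℝ, c < 1 ∧ ∀ t, a ≤ t → ψ t ≤ c * t) ∧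
      ∀ μ η : Measure X, IsProbabilityMeasure μ → IsProbabilityMeasure η →
        wassersteinDist (μ.map f) (η.map f) ≤ ψ (wassersteinDist μ η) := by
  classical
  -- `f` is 1-Lipschitz
  have hlip : ∀ x x' : X, dist (f x) (f x') ≤ dist x x' := by
    intro x x'
    rcases eq_or_ne x x' with rfl | hne
    · simp
    · have hd : 0 < dist x x' := dist_pos.2 hne
      obtain ⟨c, hc1, hc⟩ := hrak _ hd
      calc dist (f x) (f x') ≤ φ (dist x x') := hcontr x x'
      _ ≤ c * dist x x' := hc _ le_rfl
      _ ≤ dist x x' := by nlinarith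
  have hfc : Continuous f :=
    (LipschitzWith.of_dist_le_mul (K := 1) (fun x y => by
      simpa using hlip x y)).continuous
  -- the modulus for the pushforward map
  set ψ : ℝ → ℝ := fun t => if t ≤ 0 then 0 else (1 + rakBeta φ (t / 2)) / 2 * t with hψ
  refine ⟨ψ, ?_, ?_⟩
  · -- ψ is a Rakotch modulus
    intro a ha
    have hb1 : rakBeta φ (a / 2) < 1 := rakBeta_lt_one hrak (by linarith)
    have hb0 : 0 ≤ rakBeta φ (a / 2) := rakBeta_nonneg hrak (by linarith)
    refine ⟨(1 + rakBeta φ (a / 2)) / 2, by linarith, ?_⟩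
    intro t ht
    have ht0 : 0 < t := lt_of_lt_of_le ha ht
    simp only [hψ, if_neg (not_le.2 ht0)]
    have h1 : rakBeta φ (t / 2) ≤ rakBeta φ (a / 2) :=
      rakBeta_anti hrak (by linarith) (by linarith)
    nlinarith
  · intro μ η hμ hη
    set W := wassersteinDist μ η with hWdef
    set S : Set ℝ := {r : ℝ | ∃ lam : Measure (X × X), IsProbabilityMeasure lam ∧
      lam.map Prod.fst = μ ∧ lam.map Prod.snd = η ∧ r = ∫ p, dist p.1 p.2 ∂lam} with hS
    have hSne : S.Nonempty := by
      refine ⟨∫ p, dist p.1 p.2 ∂(μ.prod η), μ.prod η, inferInstance, ?_, ?_, rfl⟩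
      · exact Measure.fst_prod
      · exact Measure.snd_prod
    have hSbdd : ∀ r ∈ S, (0:ℝ) ≤ r := by
      rintro r ⟨lam, _, _, _, rfl⟩
      exact integral_nonneg fun p => dist_nonneg
    have hW0 : 0 ≤ W := Real.sInf_nonneg hSbdd
    -- integrability of continuous functions w.r.t. a probability measure
    have hint : ∀ (lam : Measure (X × X)), IsProbabilityMeasure lam →
        ∀ (h : X × X → ℝ), Continuous h → Integrable h lam := by
      intro lam hlam h hh
      exact hh.integrable_of_hasCompactSupport (HasCompactSupport.of_compactSpace _)
    have hd_cont : Continuous (fun p : X × X => dist p.1 p.2) := continuous_dist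
    have hg_cont : Continuous (fun p : X × X => dist (f p.1) (f p.2)) :=
      continuous_dist.comp ((hfc.comp continuous_fst).prodMk (hfc.comp continuous_snd))
    -- pushing a coupling forward
    have push_le : ∀ lam : Measure (X × X), IsProbabilityMeasure lam →
        lam.map Prod.fst = μ → lam.map Prod.snd = η →
        wassersteinDist (μ.map f) (η.map f) ≤ ∫ p, dist (f p.1) (f p.2) ∂lam := by
      intro lam hlam h1 h2
      have hF : Measurable (fun p : X × X => (f p.1, f p.2)) :=
        ((hfc.comp continuous_fst).measurable).prodMk ((hfc.comp continuous_snd).measurable)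
      set lam' := lam.map (fun p : X × X => (f p.1, f p.2)) with hlam'
      haveI : IsProbabilityMeasure lam' := Measure.isProbabilityMeasure_map hF.aemeasurable
      have hm1 : lam'.map Prod.fst = μ.map f := by
        rw [hlam', Measure.map_map measurable_fst hF, ← h1,
          Measure.map_map hfc.measurable measurable_fst]
        rfl
      have hm2 : lam'.map Prod.snd = η.map f := by
        rw [hlam', Measure.map_map measurable_snd hF, ← h2,
          Measure.map_map hfc.measurable measurable_snd]
        rfl
      have hintmap : ∫ p, dist p.1 p.2 ∂lam' = ∫ p, dist (f p.1) (f p.2) ∂lam := by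
        rw [hlam', integral_map hF.aemeasurable (Continuous.measurable continuous_dist).aestronglyMeasurable]
      apply csInf_le
      · exact ⟨0, fun r hr => by
          obtain ⟨l, _, _, _, rfl⟩ := hr
          exact integral_nonneg fun p => dist_nonneg⟩
      · exact ⟨lam', inferInstance, hm1, hm2, hintmap.symm⟩
    -- near-optimal couplings
    have key : ∀ ε : ℝ, 0 < ε → ∃ lam : Measure (X × X), IsProbabilityMeasure lam ∧
        lam.map Prod.fst = μ ∧ lam.map Prod.snd = η ∧
        W ≤ ∫ p, dist p.1 p.2 ∂lam ∧ (∫ p, dist p.1 p.2 ∂lam) < W + ε := by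
      intro ε hε
      obtain ⟨r, hrS, hrlt⟩ := Real.lt_sInf_add_pos hSne hε
      obtain ⟨lam, hlam, h1, h2, rfl⟩ := hrS
      exact ⟨lam, hlam, h1, h2, csInf_le ⟨0, fun r hr => hSbdd r hr⟩
        ⟨lam, hlam, h1, h2, rfl⟩, hrlt⟩
    rcases hW0.lt_or_eq with hWpos | hWzero
    · -- positive distance
      have hψW : ψ W = (1 + rakBeta φ (W / 2)) / 2 * W := if_neg (not_le.2 hWpos)
      set k := rakBeta φ (W / 2) with hk
      have hk1 : k < 1 := rakBeta_lt_one hrak (by linarith)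
      have hk0 : 0 ≤ k := rakBeta_nonneg hrak (by linarith)
      rw [hψW]
      apply le_of_forall_pos_le_add
      intro ε hε
      obtain ⟨lam, hlam, h1, h2, hWler, hrlt⟩ := key ε hε
      set r := ∫ p, dist p.1 p.2 ∂lam with hr
      have hrpos : 0 < r := lt_of_lt_of_le hWpos hWler
      set k' := rakBeta φ (r / 2) with hk'
      have hk'0 : 0 ≤ k' := rakBeta_nonneg hrak (by linarith)
      have hk'1 : k' < 1 := rakBeta_lt_one hrak (by linarith)
      have hk'k : k' ≤ k := rakBeta_anti hrak (by linarith) (by linarith)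
      -- pointwise bound
      have hpt : ∀ p : X × X, dist (f p.1) (f p.2) ≤
          k' * dist p.1 p.2 + (1 - k') * min (dist p.1 p.2) (r / 2) := by
        intro p
        rcases le_or_gt (r / 2) (dist p.1 p.2) with hge | hlt
        · have h1' : dist (f p.1) (f p.2) ≤ k' * dist p.1 p.2 :=
            le_trans (hcontr p.1 p.2) (le_rakBeta_mul hrak (by linarith) hge)
          have hmin : (0:ℝ) ≤ min (dist p.1 p.2) (r / 2) :=
            le_min dist_nonneg (by linarith)
          nlinarith
        · have hmin : min (dist p.1 p.2) (r / 2) = dist p.1 p.2 := min_eq_left hlt.le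
          rw [hmin]
          have := hlip p.1 p.2
          nlinarith
      have hint_d := hint lam hlam _ hd_cont
      have hint_g := hint lam hlam _ hg_cont
      have hint_min := hint lam hlam (fun p : X × X => min (dist p.1 p.2) (r / 2))
        (hd_cont.min continuous_const)
      have hint_rhs : Integrable
          (fun p : X × X => k' * dist p.1 p.2 + (1 - k') * min (dist p.1 p.2) (r / 2)) lam :=
        (hint_d.const_mul _).add (hint_min.const_mul _)
      have hmono : ∫ p, dist (f p.1) (f p.2) ∂lam ≤
          ∫ p, (k' * dist p.1 p.2 + (1 - k') * min (dist p.1 p.2) (r / 2)) ∂lam :=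
        integral_mono hint_g hint_rhs hpt
      have hsplit : ∫ p, (k' * dist p.1 p.2 + (1 - k') * min (dist p.1 p.2) (r / 2)) ∂lam
          = k' * r + (1 - k') * ∫ p, min (dist p.1 p.2) (r / 2) ∂lam := by
        rw [integral_add (hint_d.const_mul _) (hint_min.const_mul _),
          integral_const_mul, integral_const_mul]
      have hminle : ∫ p, min (dist p.1 p.2) (r / 2) ∂lam ≤ r / 2 := by
        have := integral_mono hint_min (integrable_const (r / 2))
          (fun p => min_le_right _ _)
        simpa [measure_univ] using this
      have hcost : ∫ p, dist (f p.1) (f p.2) ∂lam ≤ (1 + k') / 2 * r := by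
        rw [hsplit] at hmono
        nlinarith
      calc wassersteinDist (μ.map f) (η.map f)
          ≤ ∫ p, dist (f p.1) (f p.2) ∂lam := push_le lam hlam h1 h2
        _ ≤ (1 + k') / 2 * r := hcost
        _ ≤ (1 + k) / 2 * r := by nlinarith
        _ ≤ (1 + k) / 2 * (W + ε) := by nlinarith
        _ ≤ (1 + k) / 2 * W + ε := by nlinarith
    · -- zero distance
      have hψW : ψ W = 0 := by rw [← hWzero]; simp [hψ]
      rw [hψW]
      apply le_of_forall_pos_le_add
      intro ε hε
      obtain ⟨lam, hlam, h1, h2, _, hrlt⟩ := key ε hε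
      have hint_d := hint lam hlam _ hd_cont
      have hint_g := hint lam hlam _ hg_cont
      have hmono : ∫ p, dist (f p.1) (f p.2) ∂lam ≤ ∫ p, dist p.1 p.2 ∂lam :=
        integral_mono hint_g hint_d (fun p => hlip p.1 p.2)
      have := push_le lam hlam h1 h2
      rw [← hWzero] at hrlt
      linarith
end

section
/- Let f : X → Y be an Edelstein contracting map between compact metric spaces (strictly distance-decreasing on distinct points). Then for any distinct Borel probability measures μ, η on X, the Wasserstein distance satisfies d_{PY}(Pf(μ), Pf(η)) < d_{PX}(μ, η). -/
open MeasureTheory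

namespace WassersteinAux

open Metric Set Filter Topology

variable {Z : Type*} [MetricSpace Z] [CompactSpace Z] [MeasurableSpace Z] [BorelSpace Z]

/-- The set of coupling costs. -/
def costSet (μ η : Measure Z) : Set ℝ :=
  {r : ℝ | ∃ lam : Measure (Z × Z), IsProbabilityMeasure lam ∧
    lam.map Prod.fst = μ ∧ lam.map Prod.snd = η ∧ r = ∫ p, dist p.1 p.2 ∂lam}

lemma wassersteinDist_eq (μ η : Measure Z) : wassersteinDist μ η = sInf (costSet μ η) := rfl

lemma integrable_of_continuous {W : Type*} [TopologicalSpace W] [CompactSpace W]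
    [MeasurableSpace W] [OpensMeasurableSpace W] (lam : Measure W) [IsFiniteMeasure lam]
    {g : W → ℝ} (hg : Continuous g) : Integrable g lam := by
  apply hg.integrable_of_hasCompactSupport
  exact IsCompact.of_isClosed_subset isCompact_univ (isClosed_tsupport _) (subset_univ _)

lemma costSet_nonneg {μ η : Measure Z} {r : ℝ} (hr : r ∈ costSet μ η) : 0 ≤ r := by
  obtain ⟨lam, _, _, _, rfl⟩ := hr
  exact integral_nonneg fun p => dist_nonneg

lemma bddBelow_costSet (μ η : Measure Z) : BddBelow (costSet μ η) :=
  ⟨0, fun r hr => costSet_nonneg hr⟩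

lemma prod_cost_mem {μ η : Measure Z} (hμ : IsProbabilityMeasure μ)
    (hη : IsProbabilityMeasure η) :
    (∫ p, dist p.1 p.2 ∂(μ.prod η)) ∈ costSet μ η := by
  haveI := hμ; haveI := hη
  refine ⟨μ.prod η, inferInstance, ?_, ?_, rfl⟩
  · rw [Measure.map_fst_prod]; simp
  · rw [Measure.map_snd_prod]; simp

lemma costSet_nonempty {μ η : Measure Z} (hμ : IsProbabilityMeasure μ)
    (hη : IsProbabilityMeasure η) : (costSet μ η).Nonempty :=
  ⟨_, prod_cost_mem hμ hη⟩

/-- If the Wasserstein "distance" is nonpositive, then all Lipschitz test integrals agree. -/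
lemma integral_eq_of_sInf_le_zero {μ η : Measure Z} (hμ : IsProbabilityMeasure μ)
    (hη : IsProbabilityMeasure η) (hw : sInf (costSet μ η) ≤ 0)
    (L : ℝ) (g : Z → ℝ) (hgL : ∀ x y, |g x - g y| ≤ L * dist x y) (hgc : Continuous g) :
    ∫ x, g x ∂μ = ∫ x, g x ∂η := by
  haveI := hμ; haveI := hη
  have habs : |∫ x, g x ∂μ - ∫ x, g x ∂η| ≤ 0 := by
    refine le_of_forall_pos_le_add fun ε hε => ?_
    have hε' : 0 < ε / (|L| + 1) := by positivity
    obtain ⟨r, hrS, hrε⟩ := exists_lt_of_csInf_lt (costSet_nonempty hμ hη)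
      (lt_of_le_of_lt hw hε')
    obtain ⟨lam, hlamP, hfst, hsnd, rfl⟩ := hrS
    haveI := hlamP
    have h1 : ∫ x, g x ∂μ = ∫ p, g p.1 ∂lam := by
      rw [← hfst, integral_map measurable_fst.aemeasurable
        (hgc.aestronglyMeasurable)]
    have h2 : ∫ x, g x ∂η = ∫ p, g p.2 ∂lam := by
      rw [← hsnd, integral_map measurable_snd.aemeasurable
        (hgc.aestronglyMeasurable)]
    have hint1 : Integrable (fun p : Z × Z => g p.1) lam :=
      integrable_of_continuous lam (hgc.comp continuous_fst)
    have hint2 : Integrable (fun p : Z × Z => g p.2) lam :=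
      integrable_of_continuous lam (hgc.comp continuous_snd)
    have hsub : ∫ x, g x ∂μ - ∫ x, g x ∂η = ∫ p, (g p.1 - g p.2) ∂lam := by
      rw [h1, h2, integral_sub hint1 hint2]
    rw [hsub]
    calc |∫ p, (g p.1 - g p.2) ∂lam| ≤ ∫ p, |g p.1 - g p.2| ∂lam := by
          simpa [Real.norm_eq_abs] using
            norm_integral_le_integral_norm (μ := lam) (fun p : Z × Z => g p.1 - g p.2)
      _ ≤ ∫ p, (|L| + 1) * dist p.1 p.2 ∂lam := by
          refine integral_mono (hint1.sub hint2).abs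
            ((integrable_of_continuous lam (continuous_fst.dist continuous_snd)).const_mul _)
            fun p => ?_
          exact (hgL p.1 p.2).trans
            (mul_le_mul_of_nonneg_right (by linarith [le_abs_self L]) dist_nonneg)
      _ = (|L| + 1) * ∫ p, dist p.1 p.2 ∂lam := integral_const_mul _ _
      _ ≤ (|L| + 1) * (ε / (|L| + 1)) := by
          refine mul_le_mul_of_nonneg_left hrε.le (by positivity)
      _ = ε := by field_simp
      _ ≤ 0 + ε := by linarith
  have := abs_nonneg (∫ x, g x ∂μ - ∫ x, g x ∂η)
  have : |∫ x, g x ∂μ - ∫ x, g x ∂η| = 0 := le_antisymm habs this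
  linarith [abs_eq_zero.mp this, sub_eq_zero.mp (abs_eq_zero.mp this)]

/-- Positivity of the Wasserstein distance for distinct probability measures. -/
lemma wasserstein_pos {μ η : Measure Z} (hμ : IsProbabilityMeasure μ)
    (hη : IsProbabilityMeasure η) (hne : μ ≠ η) : 0 < sInf (costSet μ η) := by
  haveI := hμ; haveI := hη
  rcases lt_or_ge 0 (sInf (costSet μ η)) with h | h
  · exact h
  exfalso; apply hne
  -- all Lipschitz integrals agree, deduce equality on closed sets
  have key : ∀ F : Set Z, IsClosed F → μ F = η F := by
    intro F hF
    rcases F.eq_empty_or_nonempty with rfl | hFne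
    · simp
    -- test functions g n x = max (1 - (n+1) * infDist x F) 0
    set g : ℕ → Z → ℝ := fun n x => max (1 - (n + 1 : ℝ) * infDist x F) 0 with hg
    have hgc : ∀ n, Continuous (g n) :=
      fun n => (continuous_const.sub ((continuous_const.mul
        (continuous_infDist_pt F)))).max continuous_const
    have hgL : ∀ n x y, |g n x - g n y| ≤ (n + 1 : ℝ) * dist x y := by
      intro n x y
      have h1 : |g n x - g n y| ≤ |(1 - (n + 1 : ℝ) * infDist x F)
          - (1 - (n + 1 : ℝ) * infDist y F)| := abs_max_sub_max_le_abs _ _ _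
      have h2 : |(1 - (n + 1 : ℝ) * infDist x F) - (1 - (n + 1 : ℝ) * infDist y F)|
          = (n + 1 : ℝ) * |infDist x F - infDist y F| := by
        rw [show (1 - (n + 1 : ℝ) * infDist x F) - (1 - (n + 1 : ℝ) * infDist y F)
            = (n + 1 : ℝ) * (infDist y F - infDist x F) by ring, abs_mul,
          abs_of_nonneg (by positivity : (0:ℝ) ≤ (n + 1 : ℝ)), abs_sub_comm]
      have h3 : |infDist x F - infDist y F| ≤ dist x y := by
        rw [abs_sub_le_iff]
        constructor
        · linarith [infDist_le_infDist_add_dist (x := x) (y := y) (s := F)]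
        · linarith [infDist_le_infDist_add_dist (x := y) (y := x) (s := F),
            dist_comm x y]
      calc |g n x - g n y| ≤ (n + 1 : ℝ) * |infDist x F - infDist y F| := by
            rw [← h2]; exact h1
        _ ≤ (n + 1 : ℝ) * dist x y := by
            exact mul_le_mul_of_nonneg_left h3 (by positivity)
    have heq : ∀ n, ∫ x, g n x ∂μ = ∫ x, g n x ∂η := fun n =>
      integral_eq_of_sInf_le_zero hμ hη h _ (g n) (hgL n) (hgc n)
    -- dominated convergence
    have hbound : ∀ n x, ‖g n x‖ ≤ 1 := by
      intro n x
      rw [Real.norm_eq_abs, abs_le]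
      constructor
      · linarith [le_max_right (1 - (n + 1 : ℝ) * infDist x F) (0:ℝ)]
      · apply max_le _ zero_le_one
        have : 0 ≤ (n + 1 : ℝ) * infDist x F :=
          mul_nonneg (by positivity) infDist_nonneg
        linarith
    have hlim : ∀ x, Tendsto (fun n => g n x) atTop
        (𝓝 (F.indicator (fun _ => (1:ℝ)) x)) := by
      intro x
      by_cases hx : x ∈ F
      · have : ∀ n, g n x = 1 := by
          intro n
          simp [hg, infDist_zero_of_mem hx]
        simp only [this, indicator_of_mem hx]
        exact tendsto_const_nhds
      · have hd : 0 < infDist x F := (hF.notMem_iff_infDist_pos hFne).mp hx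
        rw [indicator_of_notMem hx]
        obtain ⟨N, hN⟩ := exists_nat_ge (1 / infDist x F)
        apply tendsto_const_nhds.congr' ((eventually_ge_atTop N).mono fun n hn => ?_)
        have h1 : (1 : ℝ) ≤ (n + 1 : ℝ) * infDist x F := by
          have : (1 / infDist x F) ≤ (n : ℝ) + 1 := by
            have : (N : ℝ) ≤ (n : ℝ) := by exact_mod_cast hn
            linarith
          calc (1 : ℝ) = (1 / infDist x F) * infDist x F := by field_simp
            _ ≤ ((n : ℝ) + 1) * infDist x F := mul_le_mul_of_nonneg_right this hd.le
        symm
        simp only [hg]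
        rw [max_eq_right]
        linarith
    have hμlim : Tendsto (fun n => ∫ x, g n x ∂μ) atTop (𝓝 ((μ F).toReal)) := by
      have := tendsto_integral_of_dominated_convergence (μ := μ)
        (F := fun n x => g n x) (f := F.indicator fun _ => (1:ℝ)) (fun _ => 1)
        (fun n => (hgc n).aestronglyMeasurable) (integrable_const 1)
        (fun n => Eventually.of_forall (hbound n))
        (Eventually.of_forall hlim)
      rwa [integral_indicator_const (1:ℝ) hF.measurableSet, smul_eq_mul, mul_one] at this
    have hηlim : Tendsto (fun n => ∫ x, g n x ∂η) atTop (𝓝 ((η F).toReal)) := by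
      have := tendsto_integral_of_dominated_convergence (μ := η)
        (F := fun n x => g n x) (f := F.indicator fun _ => (1:ℝ)) (fun _ => 1)
        (fun n => (hgc n).aestronglyMeasurable) (integrable_const 1)
        (fun n => Eventually.of_forall (hbound n))
        (Eventually.of_forall hlim)
      rwa [integral_indicator_const (1:ℝ) hF.measurableSet, smul_eq_mul, mul_one] at this
    have : (μ F).toReal = (η F).toReal := by
      apply tendsto_nhds_unique _ hηlim
      simpa only [heq] using hμlim
    exact (ENNReal.toReal_eq_toReal_iff' (measure_ne_top μ F) (measure_ne_top η F)).mp this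
  refine ext_of_generate_finite {s : Set Z | IsClosed s} ?_ isPiSystem_isClosed
    (fun s hs => key s hs) ?_
  · rw [BorelSpace.measurable_eq (α := Z), borel_eq_generateFrom_isClosed]
  · simp [key univ isClosed_univ]

end WassersteinAux

open WassersteinAux Metric Set Filter

/-- If `f` is Edelstein contracting between compact metric spaces, then the pushforward
map strictly decreases the Wasserstein distance between distinct probability measures. -/
theorem pushforward_strictly_decreases_wasserstein
    {X Y : Type*} [MetricSpace X] [CompactSpace X] [MeasurableSpace X] [BorelSpace X]
    [MetricSpace Y] [CompactSpace Y] [MeasurableSpace Y] [BorelSpace Y]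
    (f : X → Y) (hEd : ∀ x x' : X, x ≠ x' → dist (f x) (f x') < dist x x')
    (μ η : Measure X) (hμ : IsProbabilityMeasure μ) (hη : IsProbabilityMeasure η)
    (hne : μ ≠ η) :
    wassersteinDist (μ.map f) (η.map f) < wassersteinDist μ η := by
  haveI := hμ; haveI := hη
  have hf_le : ∀ x x', dist (f x) (f x') ≤ dist x x' := by
    intro x x'
    by_cases hxx : x = x'
    · subst hxx; simp
    · exact (hEd x x' hxx).le
  have hfL : LipschitzWith 1 f := LipschitzWith.of_dist_le_mul (by simpa using hf_le)
  have hfc : Continuous f := hfL.continuous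
  have hfm : Measurable f := hfc.measurable
  set w := sInf (costSet μ η) with hw_def
  have hw : 0 < w := wasserstein_pos hμ hη hne
  set δ := w / 2 with hδ_def
  have hδ : 0 < δ := by positivity
  set D := diam (univ : Set X) with hD_def
  have hD : ∀ x x' : X, dist x x' ≤ D :=
    fun x x' => dist_le_diam_of_mem isCompact_univ.isBounded trivial trivial
  set K := {p : X × X | δ ≤ dist p.1 p.2} with hK_def
  have hKc : IsClosed K := isClosed_le continuous_const (continuous_fst.dist continuous_snd)
  have hKcompact : IsCompact K := hKc.isCompact
  -- K is nonempty
  have hKne : K.Nonempty := by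
    by_contra hKe
    rw [not_nonempty_iff_eq_empty] at hKe
    have hall : ∀ p : X × X, dist p.1 p.2 < δ := by
      intro p
      by_contra hp
      push_neg at hp
      exact absurd (show p ∈ K from hp) (by simp [hKe])
    have hr0 : (∫ p, dist p.1 p.2 ∂(μ.prod η)) ∈ costSet μ η := prod_cost_mem hμ hη
    have h1 : w ≤ ∫ p, dist p.1 p.2 ∂(μ.prod η) := csInf_le (bddBelow_costSet μ η) hr0
    have h2 : ∫ p, dist p.1 p.2 ∂(μ.prod η) ≤ δ := by
      haveI : IsProbabilityMeasure (μ.prod η) := inferInstance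
      calc ∫ p, dist p.1 p.2 ∂(μ.prod η) ≤ ∫ _p, δ ∂(μ.prod η) :=
            integral_mono (integrable_of_continuous _ (continuous_fst.dist continuous_snd))
              (integrable_const δ) (fun p => (hall p).le)
        _ = δ := by simp
    rw [hδ_def] at h2
    linarith
  have hD0 : 0 < D := by
    obtain ⟨p0, hp0⟩ := hKne
    exact lt_of_lt_of_le hδ (le_trans hp0 (hD p0.1 p0.2))
  -- minimum of the gap on K
  have hφc : Continuous fun p : X × X => dist p.1 p.2 - dist (f p.1) (f p.2) :=
    (continuous_fst.dist continuous_snd).sub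
      ((hfc.comp continuous_fst).dist (hfc.comp continuous_snd))
  obtain ⟨p0, hp0K, hmin⟩ := hKcompact.exists_isMinOn hKne hφc.continuousOn
  set ε := dist p0.1 p0.2 - dist (f p0.1) (f p0.2) with hε_def
  have hp0ne : p0.1 ≠ p0.2 := by
    have : 0 < dist p0.1 p0.2 := lt_of_lt_of_le hδ hp0K
    exact dist_pos.mp this
  have hε : 0 < ε := sub_pos.mpr (hEd _ _ hp0ne)
  have hεK : ∀ p ∈ K, ε ≤ dist p.1 p.2 - dist (f p.1) (f p.2) := fun p hp => hmin hp
  set c := ε * (w / (2 * D)) with hc_def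
  have hc : 0 < c := by positivity
  -- main estimate: for each coupling cost r, W' ≤ r - c
  have main : ∀ r ∈ costSet μ η, wassersteinDist (μ.map f) (η.map f) ≤ r - c := by
    intro r hr
    obtain ⟨lam, hlamP, hfst, hsnd, rfl⟩ := hr
    haveI := hlamP
    set G : X × X → Y × Y := fun p => (f p.1, f p.2) with hG_def
    have hGm : Measurable G := (hfm.comp measurable_fst).prodMk (hfm.comp measurable_snd)
    have hP' : IsProbabilityMeasure (lam.map G) := Measure.isProbabilityMeasure_map hGm.aemeasurable
    have hfst' : (lam.map G).map Prod.fst = μ.map f := by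
      rw [Measure.map_map measurable_fst hGm]
      have : (Prod.fst ∘ G) = f ∘ Prod.fst := rfl
      rw [this, ← Measure.map_map hfm measurable_fst, hfst]
    have hsnd' : (lam.map G).map Prod.snd = η.map f := by
      rw [Measure.map_map measurable_snd hGm]
      have : (Prod.snd ∘ G) = f ∘ Prod.snd := rfl
      rw [this, ← Measure.map_map hfm measurable_snd, hsnd]
    have hcost' : ∫ q, dist q.1 q.2 ∂(lam.map G) = ∫ p, dist (f p.1) (f p.2) ∂lam := by
      rw [integral_map hGm.aemeasurable (continuous_fst.dist continuous_snd).aestronglyMeasurable]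
    have hmem' : (∫ p, dist (f p.1) (f p.2) ∂lam) ∈ costSet (μ.map f) (η.map f) :=
      ⟨lam.map G, hP', hfst', hsnd', hcost'.symm⟩
    have hW'le : wassersteinDist (μ.map f) (η.map f) ≤ ∫ p, dist (f p.1) (f p.2) ∂lam :=
      csInf_le (bddBelow_costSet _ _) hmem'
    set k := (lam K).toReal with hk_def
    have hk0 : 0 ≤ k := ENNReal.toReal_nonneg
    have hwr : w ≤ ∫ p, dist p.1 p.2 ∂lam :=
      csInf_le (bddBelow_costSet μ η) ⟨lam, hlamP, hfst, hsnd, rfl⟩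
    -- lower bound on lam K
    have hindD : Integrable (K.indicator fun _ => D) lam :=
      (integrable_const D).indicator hKc.measurableSet
    have hk1 : ∫ p, dist p.1 p.2 ∂lam ≤ D * k + δ := by
      have hpt : ∀ p : X × X, dist p.1 p.2 ≤ K.indicator (fun _ => D) p + δ := by
        intro p
        by_cases hp : p ∈ K
        · rw [indicator_of_mem hp]
          exact le_add_of_le_of_nonneg (hD p.1 p.2) hδ.le
        · rw [indicator_of_notMem hp, zero_add]
          have : ¬ δ ≤ dist p.1 p.2 := hp
          linarith [not_le.mp this]
      calc ∫ p, dist p.1 p.2 ∂lam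
          ≤ ∫ p, (K.indicator (fun _ => D) p + δ) ∂lam :=
            integral_mono (integrable_of_continuous _ (continuous_fst.dist continuous_snd))
              (hindD.add (integrable_const δ)) hpt
        _ = (∫ p, K.indicator (fun _ => D) p ∂lam) + ∫ _p, δ ∂lam :=
            integral_add hindD (integrable_const δ)
        _ = D * k + δ := by
            rw [integral_indicator_const D hKc.measurableSet]
            simp [hk_def, mul_comm, measureReal_def]
      -- done
    have hk2 : w / (2 * D) ≤ k := by
      rw [div_le_iff₀ (by positivity)]
      have : w ≤ D * k + δ := le_trans hwr hk1
      rw [hδ_def] at this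
      nlinarith
    -- upper bound on pushforward cost
    have hindε : Integrable (K.indicator fun _ => ε) lam :=
      (integrable_const ε).indicator hKc.measurableSet
    have hcostle : ∫ p, dist (f p.1) (f p.2) ∂lam
        ≤ (∫ p, dist p.1 p.2 ∂lam) - ε * k := by
      have hpt : ∀ p : X × X,
          dist (f p.1) (f p.2) ≤ dist p.1 p.2 - K.indicator (fun _ => ε) p := by
        intro p
        by_cases hp : p ∈ K
        · rw [indicator_of_mem hp]
          linarith [hεK p hp]
        · rw [indicator_of_notMem hp, sub_zero]
          exact hf_le p.1 p.2
      calc ∫ p, dist (f p.1) (f p.2) ∂lam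
          ≤ ∫ p, (dist p.1 p.2 - K.indicator (fun _ => ε) p) ∂lam :=
            integral_mono
              (integrable_of_continuous _
                ((hfc.comp continuous_fst).dist (hfc.comp continuous_snd)))
              ((integrable_of_continuous _ (continuous_fst.dist continuous_snd)).sub hindε) hpt
        _ = (∫ p, dist p.1 p.2 ∂lam) - ∫ p, K.indicator (fun _ => ε) p ∂lam :=
            integral_sub (integrable_of_continuous _ (continuous_fst.dist continuous_snd)) hindε
        _ = (∫ p, dist p.1 p.2 ∂lam) - ε * k := by
            rw [integral_indicator_const ε hKc.measurableSet]
            simp [hk_def, mul_comm, measureReal_def]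
    have hεk : c ≤ ε * k := by
      rw [hc_def]
      exact mul_le_mul_of_nonneg_left hk2 hε.le
    linarith
  have hfinal : wassersteinDist (μ.map f) (η.map f) + c ≤ w := by
    apply le_csInf (costSet_nonempty hμ hη)
    intro r hr
    linarith [main r hr]
  have : wassersteinDist μ η = w := rfl
  rw [this]
  linarith
end

section
/- Let D be a nonempty compact subset of a complete metric space X and (f_n) a sequence of self-maps of X with f_n(D) ⊆ D for all n, such that each f_n is φ-contracting for a common nondecreasing φ : [0,∞) → [0,∞) with sup_{t≥δ} φ(t)/t < 1 for every δ > 0. Then the intersection ⋂_{n} f_0 ∘ f_1 ∘ ⋯ ∘ f_n(D) is a singleton. -/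
/-- The composition `f 0 ∘ f 1 ∘ ⋯ ∘ f n`. -/
def compTo {X : Type*} (f : ℕ → X → X) : ℕ → X → X
  | 0 => f 0
  | n + 1 => compTo f n ∘ f (n + 1)

/-- If `D` is a nonempty compact subset of a complete metric space, invariant under each
map of a sequence `(f n)` of `φ`-contractions for a common nondecreasing `φ` satisfying
the Rakotch condition, then `⋂ₙ f 0 ∘ ⋯ ∘ f n (D)` is a singleton. -/
theorem inter_images_singleton {X : Type*} [MetricSpace X] [CompleteSpace X]
    (D : Set X) (hDc : IsCompact D) (hDne : D.Nonempty)
    (f : ℕ → X → X) (hmaps : ∀ n, Set.MapsTo (f n) D D)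
    (φ : ℝ → ℝ) (hmono : Monotone φ) (h0 : φ 0 = 0)
    (hrak : ∀ δ : ℝ, 0 < δ → ∃ c : ℝ, c < 1 ∧ ∀ t, δ ≤ t → φ t ≤ c * t)
    (hcontr : ∀ n, ∀ x x' : X, dist (f n x) (f n x') ≤ φ (dist x x')) :
    ∃ p : X, (⋂ n : ℕ, compTo f n '' D) = {p} := by
  -- basic facts about φ
  have hφnn : ∀ t : ℝ, 0 ≤ t → 0 ≤ φ t := fun t ht => h0 ▸ hmono ht
  have hφle : ∀ t : ℝ, 0 ≤ t → φ t ≤ t := by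
    intro t ht
    rcases eq_or_lt_of_le ht with h | h
    · rw [← h, h0]
    · obtain ⟨c, hc1, hc⟩ := hrak t h
      calc φ t ≤ c * t := hc t le_rfl
        _ ≤ 1 * t := by nlinarith
        _ = t := one_mul t
  -- continuity of the maps
  have hlip : ∀ n, Continuous (f n) := by
    intro n
    refine (LipschitzWith.of_dist_le_mul (K := 1) fun x y => ?_).continuous
    calc dist (f n x) (f n y) ≤ φ (dist x y) := hcontr n x y
      _ ≤ dist x y := hφle _ dist_nonneg
      _ = 1 * dist x y := (one_mul _).symm
  have hcomp_cont : ∀ n, Continuous (compTo f n) := by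
    intro n
    induction n with
    | zero => exact hlip 0
    | succ n ih => exact ih.comp (hlip (n + 1))
  have hcomp_maps : ∀ n, Set.MapsTo (compTo f n) D D := by
    intro n
    induction n with
    | zero => exact hmaps 0
    | succ n ih => exact ih.comp (hmaps (n + 1))
  -- the sets
  set S : ℕ → Set X := fun n => compTo f n '' D with hS
  have hSsub : ∀ n, S (n + 1) ⊆ S n := by
    intro n
    have : compTo f (n + 1) '' D = compTo f n '' (f (n + 1) '' D) := by
      rw [Set.image_image]; rfl
    rw [hS]
    simp only
    rw [this]
    exact Set.image_mono ((hmaps (n + 1)).image_subset)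
  have hSne : ∀ n, (S n).Nonempty := fun n => hDne.image _
  have hScomp : ∀ n, IsCompact (S n) := fun n => hDc.image (hcomp_cont n)
  have hne : (⋂ n, S n).Nonempty :=
    IsCompact.nonempty_iInter_of_sequence_nonempty_isCompact_isClosed S hSsub hSne
      (hScomp 0) (fun n => (hScomp n).isClosed)
  obtain ⟨p, hp⟩ := hne
  -- distance bound
  have hdist : ∀ n (x y : X), dist (compTo f n x) (compTo f n y) ≤ φ^[n + 1] (dist x y) := by
    intro n
    induction n with
    | zero => intro x y; exact hcontr 0 x y
    | succ n ih =>
      intro x y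
      calc dist (compTo f (n + 1) x) (compTo f (n + 1) y)
          = dist (compTo f n (f (n + 1) x)) (compTo f n (f (n + 1) y)) := rfl
        _ ≤ φ^[n + 1] (dist (f (n + 1) x) (f (n + 1) y)) := ih _ _
        _ ≤ φ^[n + 1] (φ (dist x y)) := (hmono.iterate (n + 1)) (hcontr (n + 1) x y)
        _ = φ^[n + 1 + 1] (dist x y) := by
            rw [← Function.iterate_succ_apply φ (n + 1) (dist x y)]
  -- the diameter sequence
  set d0 : ℝ := Metric.diam D with hd0
  have hd0nn : 0 ≤ d0 := Metric.diam_nonneg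
  have hiter_nn : ∀ n, 0 ≤ φ^[n] d0 := by
    intro n
    induction n with
    | zero => exact hd0nn
    | succ n ih =>
      rw [Function.iterate_succ_apply']
      exact hφnn _ ih
  have hiter_anti : ∀ n, φ^[n + 1] d0 ≤ φ^[n] d0 := by
    intro n
    rw [Function.iterate_succ_apply']
    exact hφle _ (hiter_nn n)
  -- key: iterates get below any ε
  have hkey : ∀ ε : ℝ, 0 < ε → ∃ N, φ^[N] d0 ≤ ε := by
    intro ε hε
    obtain ⟨c, hc1, hc⟩ := hrak ε hε
    set c' : ℝ := max c 0 with hc'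
    have hc'1 : c' < 1 := max_lt hc1 one_pos
    have hc'0 : 0 ≤ c' := le_max_right c 0
    have hbound : ∀ n, φ^[n] d0 ≤ max ε (c' ^ n * d0) := by
      intro n
      induction n with
      | zero => simpa using le_max_right ε d0
      | succ n ih =>
        rcases le_or_gt (φ^[n] d0) ε with h | h
        · exact le_max_of_le_left ((hiter_anti n).trans h)
        · have h2 : φ^[n] d0 ≤ c' ^ n * d0 := by
            rcases le_total (c' ^ n * d0) ε with he | he
            · have := ih.trans (max_le le_rfl he)
              linarith
            · exact ih.trans (max_le he le_rfl)
          have h3 : φ (φ^[n] d0) ≤ c * φ^[n] d0 := hc _ h.le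
          have h4 : c * φ^[n] d0 ≤ c' * φ^[n] d0 :=
            mul_le_mul_of_nonneg_right (le_max_left c 0) (hiter_nn n)
          refine le_max_of_le_right ?_
          rw [Function.iterate_succ_apply', pow_succ, mul_comm (c' ^ n) c', mul_assoc]
          calc φ (φ^[n] d0) ≤ c' * φ^[n] d0 := h3.trans h4
            _ ≤ c' * (c' ^ n * d0) := mul_le_mul_of_nonneg_left h2 hc'0
    have htend : Filter.Tendsto (fun n => c' ^ n * d0) Filter.atTop (nhds 0) := by
      have := tendsto_pow_atTop_nhds_zero_of_lt_one hc'0 hc'1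
      simpa using this.mul_const d0
    have := (htend.eventually (eventually_le_nhds hε)).exists
    obtain ⟨N, hN⟩ := this
    exact ⟨N, (hbound N).trans (max_le le_rfl hN)⟩
  -- two points in the intersection coincide
  have huni : ∀ q ∈ ⋂ n, S n, q = p := by
    intro q hq
    have hd : ∀ ε : ℝ, 0 < ε → dist q p ≤ ε := by
      intro ε hε
      obtain ⟨N, hN⟩ := hkey ε hε
      have hqN := Set.mem_iInter.mp hq N
      have hpN := Set.mem_iInter.mp hp N
      obtain ⟨x, hx, hxq⟩ := hqN
      obtain ⟨y, hy, hyp⟩ := hpN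
      have hxy : dist x y ≤ d0 := Metric.dist_le_diam_of_mem hDc.isBounded hx hy
      calc dist q p = dist (compTo f N x) (compTo f N y) := by rw [hxq, hyp]
        _ ≤ φ^[N + 1] (dist x y) := hdist N x y
        _ ≤ φ^[N + 1] d0 := (hmono.iterate (N + 1)) hxy
        _ ≤ φ^[N] d0 := hiter_anti N
        _ ≤ ε := hN
    have : dist q p ≤ 0 := le_of_forall_pos_le_add (by intro ε hε; simpa using hd ε hε)
    exact dist_le_zero.mp this
  refine ⟨p, ?_⟩
  ext q
  simp only [Set.mem_singleton_iff]
  constructor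
  · exact huni q
  · rintro rfl; exact hp
end
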